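/- arXiv:2408.15458 — 3 statements merged into one kernel-verified Lean document; each statement's English description precedes it below -/
import Mathlib

section
/- Let (X_i, Y_i), i = 1, ..., n+1, be an exchangeable sequence of random pairs taking values in a measurable space 𝒳 × {0,1}, and let 𝒳 = 𝒳_1 ∪ ... ∪ 𝒳_K be a finite measurable partition of the feature space. Let p̂ : 𝒳 → [0,1] be a fixed (non-random) measurable function, interpreted as p̂(Y=1|x), and define the conformity score s(x,y) = 1 − p̂(y|x), i.e. s(x,1) = 1 − p̂(x) and s(x,0) = p̂(x). Fix a miscoverage level α ∈ (0,1). For each j ∈ {1,...,K}, let k_j = |{i ∈ [n] : X_i ∈ 𝒳_j}| be the (random) number of calibration points falling in 𝒳_j, and let q_j be the ⌈(k_j+1)(1−α)⌉-th smallest value among the calibration scores {s(X_i, Y_i) : i ∈ [n], X_i ∈ 𝒳_j} (with q_j = +∞ whenever ⌈(k_j+1)(1−α)⌉ > k_j). Define the local prediction set C_locart(x) = {ℓ ∈ {0,1} : p̂(ℓ|x) ≥ 1 − q_j} for x ∈ 𝒳_j. Then for every j with P(X_{n+1} ∈ 𝒳_j) > 0, P( Y_{n+1} ∈ C_locart(X_{n+1})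 | X_{n+1} ∈ 𝒳_j ) ≥ 1 − α. -/
open MeasureTheory ProbabilityTheory
open scoped ENNReal Classical

/-- A finite sequence of random variables is exchangeable if its joint distribution is
invariant under every permutation of the indices. -/
def Exchangeable {Ω : Type*} [MeasurableSpace Ω] {E : Type*} [MeasurableSpace E]
    {m : ℕ} (μ : Measure Ω) (Z : Fin m → Ω → E) : Prop :=
  ∀ σ : Equiv.Perm (Fin m),
    Measure.map (fun ω (i : Fin m) => Z (σ i) ω) μ =
      Measure.map (fun ω (i : Fin m) => Z i ω) μ

/-- Predicted probability of label `ℓ ∈ {0,1}` at `x`, given `phat x = p̂(Y=1|x)`: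
`p̂(1|x) = phat x` and `p̂(0|x) = 1 - phat x`. -/
noncomputable def predProb {𝒳 : Type*} (phat : 𝒳 → ℝ) (ℓ : Fin 2) (x : 𝒳) : ℝ :=
  if ℓ = 1 then phat x else 1 - phat x

/-- Binary-classification conformity score `s(x,y) = 1 - p̂(y|x)`, i.e.
`s(x,1) = 1 - phat x` and `s(x,0) = phat x`. -/
noncomputable def confScore {𝒳 : Type*} (phat : 𝒳 → ℝ) (x : 𝒳) (y : Fin 2) : ℝ :=
  if y = 1 then 1 - phat x else phat x

/-- The `k`-th smallest value (1-indexed, i.e. the `k`-th order statistic) of a finite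
multiset of reals, as an extended real number, with the convention that it equals `+∞`
whenever `k` exceeds the cardinality of the multiset (note `k ≥ 1` always holds in
applications, so the condition `k - 1 < card` coincides with `k ≤ card`). -/
noncomputable def kthSmallestM (s : Multiset ℝ) (k : ℕ) : EReal :=
  if h : k - 1 < Multiset.card s then
    (((s.sort (· ≤ ·)).get ⟨k - 1, by simpa using h⟩ : ℝ) : EReal)
  else ⊤

/-- The (random) set of calibration indices `i ∈ {1,…,n}` whose feature falls in `A`. -/
noncomputable def calibIndices {Ω 𝒳 : Type*} {n : ℕ}
    (X : Fin (n + 1) → Ω → 𝒳) (A : Set 𝒳) (ω : Ω) : Finset (Fin n) :=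
  Finset.univ.filter (fun i : Fin n => X i.castSucc ω ∈ A)

/-- The Locart local conformal quantile for a partition element `A`: the
`⌈(k_A + 1)(1-α)⌉`-th smallest calibration score among calibration points falling in `A`
(where `k_A` is the number of such points), and `+∞` if `⌈(k_A + 1)(1-α)⌉ > k_A`. -/
noncomputable def locartQuantile {Ω 𝒳 : Type*} {n : ℕ}
    (X : Fin (n + 1) → Ω → 𝒳) (Y : Fin (n + 1) → Ω → Fin 2)
    (phat : 𝒳 → ℝ) (A : Set 𝒳) (α : ℝ) (ω : Ω) : EReal :=
  kthSmallestM
    ((calibIndices X A ω).val.map fun i => confScore phat (X i.castSucc ω) (Y i.castSucc ω))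
    ⌈(((calibIndices X A ω).card : ℝ) + 1) * (1 - α)⌉₊


/-! ### Auxiliary lemmas -/

section LocartAux

lemma countLemma {ι : Type*} (S : Finset ι) (t : ι → ℝ) (k : ℕ) :
    min k S.card ≤ (S.filter fun i => (S.filter fun r => t r < t i).card < k).card := by
  by_contra h
  push_neg at h
  set T := S.filter fun i => (S.filter fun r => t r < t i).card < k with hT
  have hTS : T ⊆ S := Finset.filter_subset _ _
  have hne : (S \ T).Nonempty := by
    rw [Finset.sdiff_nonempty]
    intro hsub
    have := Finset.card_le_card hsub
    omega
  obtain ⟨i, hiS, hmin⟩ := Finset.exists_min_image (S \ T) t hne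
  obtain ⟨hiS', hiT⟩ := Finset.mem_sdiff.mp hiS
  have hsub : S.filter (fun r => t r < t i) ⊆ T := by
    intro r hr
    rw [Finset.mem_filter] at hr
    by_contra hrT
    have := hmin r (Finset.mem_sdiff.mpr ⟨hr.1, hrT⟩)
    linarith [hr.2]
  have hlt : (S.filter (fun r => t r < t i)).card < k :=
    lt_of_le_of_lt (Finset.card_le_card hsub) (h.trans_le (min_le_left _ _))
  exact hiT (Finset.mem_filter.mpr ⟨hiS', hlt⟩)

lemma sorted_le_get_iff (L : List ℝ) (hL : L.Pairwise (· ≤ ·)) (t : ℝ) (p : ℕ) (hp : p < L.length) :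
    t ≤ L.get ⟨p, hp⟩ ↔ L.countP (fun x => decide (x < t)) ≤ p := by
  induction L generalizing p with
  | nil => simp at hp
  | cons a l ih =>
    rw [List.pairwise_cons] at hL
    by_cases hat : a < t
    · have hc : (a::l).countP (fun x => decide (x < t)) =
        l.countP (fun x => decide (x < t)) + 1 := by
        rw [List.countP_cons]; simp [hat]
      rw [hc]
      cases p with
      | zero =>
        simp only [List.get]
        constructor
        · intro hle; linarith
        · intro hle; omega
      | succ q =>
        have hq : q < l.length := by simpa using hp
        have hget : (a::l).get ⟨q+1, hp⟩ = l.get ⟨q, hq⟩ := rfl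
        rw [hget, ih hL.2 q hq]
        omega
    · have h0 : l.countP (fun x => decide (x < t)) = 0 := by
        rw [List.countP_eq_zero]
        intro b hb
        simp only [decide_eq_true_eq, not_lt]
        have := hL.1 b hb
        linarith [not_lt.mp hat]
      have h0' : (a::l).countP (fun x => decide (x < t)) = 0 := by
        rw [List.countP_cons]
        simp [hat, h0]
      rw [h0']
      simp only [Nat.zero_le, iff_true]
      have hta : t ≤ a := not_lt.mp hat
      cases p with
      | zero => simpa using hta
      | succ q =>
        have hq : q < l.length := by simpa using hp
        have hget : (a::l).get ⟨q+1, hp⟩ = l.get ⟨q, hq⟩ := rfl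
        rw [hget]
        exact hta.trans (hL.1 _ (l.get_mem _))

lemma le_kthSmallestM_iff (M : Multiset ℝ) (k : ℕ) (hk : 1 ≤ k) (t : ℝ) :
    ((t : ℝ) : EReal) ≤ kthSmallestM M k ↔ M.countP (fun x => x < t) < k := by
  unfold kthSmallestM
  split_ifs with h
  · rw [EReal.coe_le_coe_iff,
      sorted_le_get_iff _ (Multiset.pairwise_sort M _) t (k-1) (by simpa using h)]
    have hc : M.countP (fun x => x < t) =
        (M.sort (· ≤ ·)).countP (fun x => decide (x < t)) := by
      conv_lhs => rw [← M.sort_eq (· ≤ ·)]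
      rw [Multiset.coe_countP]
    rw [← hc]
    omega
  · simp only [le_top, true_iff]
    have h1 : M.countP (fun x => x < t) ≤ Multiset.card M := Multiset.countP_le_card _ _
    omega

lemma ereal_event (a : ℝ) (q : EReal) :
    ((1 - a : ℝ) : EReal) ≥ 1 - q ↔ (a : EReal) ≤ q := by
  induction q using EReal.rec with
  | bot =>
    have h1 : (1 : EReal) - ⊥ = ⊤ := EReal.sub_bot (EReal.coe_ne_bot 1)
    have h2 : (1:EReal) - (a:ℝ) ≠ ⊤ := by
      rw [show (1:EReal) = ((1:ℝ):EReal) from rfl, ← EReal.coe_sub]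
      exact EReal.coe_ne_top _
    rw [h1]
    simp [h2]
  | coe r =>
    have h1 : (1 : EReal) - (r : ℝ) = ((1 - r : ℝ) : EReal) := by
      rw [EReal.coe_sub]; norm_cast
    rw [h1, ge_iff_le, EReal.coe_le_coe_iff, EReal.coe_le_coe_iff]
    constructor <;> intro <;> linarith
  | top =>
    have h1 : (1 : EReal) - ⊤ = ⊥ := by
      rw [sub_eq_add_neg]; simp
    rw [h1]
    simp

noncomputable def scFn {𝒳 : Type*} (phat : 𝒳 → ℝ) (e : 𝒳 × Fin 2) : ℝ := confScore phat e.1 e.2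

noncomputable def mCnt {𝒳 : Type*} {n : ℕ} (A : Set 𝒳) (i : Fin (n+1))
    (w : Fin (n+1) → 𝒳 × Fin 2) : ℕ :=
  (Finset.univ.filter fun r => r ≠ i ∧ (w r).1 ∈ A).card

noncomputable def nCnt {𝒳 : Type*} {n : ℕ} (phat : 𝒳 → ℝ) (A : Set 𝒳) (i : Fin (n+1))
    (w : Fin (n+1) → 𝒳 × Fin 2) : ℕ :=
  (Finset.univ.filter fun r => r ≠ i ∧ (w r).1 ∈ A ∧ scFn phat (w r) < scFn phat (w i)).card

noncomputable def goodSet {𝒳 : Type*} (n : ℕ) (phat : 𝒳 → ℝ) (A : Set 𝒳) (α : ℝ)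
    (i : Fin (n+1)) : Set (Fin (n+1) → 𝒳 × Fin 2) :=
  {w | (w i).1 ∈ A ∧ nCnt phat A i w < ⌈((mCnt A i w : ℝ) + 1) * (1 - α)⌉₊}

lemma mCnt_perm {𝒳 : Type*} {n : ℕ} (A : Set 𝒳) (σ : Equiv.Perm (Fin (n+1))) (i : Fin (n+1))
    (w : Fin (n+1) → 𝒳 × Fin 2) : mCnt A i (fun r => w (σ r)) = mCnt A (σ i) w := by
  unfold mCnt
  apply Finset.card_bij' (fun r _ => σ r) (fun r _ => σ.symm r)
  · intro r hr
    rw [Finset.mem_filter] at hr ⊢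
    refine ⟨Finset.mem_univ _, fun h => hr.2.1 (σ.injective h), hr.2.2⟩
  · intro r hr
    rw [Finset.mem_filter] at hr ⊢
    refine ⟨Finset.mem_univ _, fun h => hr.2.1 ?_, ?_⟩
    · rw [← h]; simp
    · simpa using hr.2.2
  · intro r _; simp
  · intro r _; simp

lemma nCnt_perm {𝒳 : Type*} {n : ℕ} (phat : 𝒳 → ℝ) (A : Set 𝒳) (σ : Equiv.Perm (Fin (n+1)))
    (i : Fin (n+1)) (w : Fin (n+1) → 𝒳 × Fin 2) :
    nCnt phat A i (fun r => w (σ r)) = nCnt phat A (σ i) w := by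
  unfold nCnt
  apply Finset.card_bij' (fun r _ => σ r) (fun r _ => σ.symm r)
  · intro r hr
    rw [Finset.mem_filter] at hr ⊢
    exact ⟨Finset.mem_univ _, fun h => hr.2.1 (σ.injective h), hr.2.2.1, hr.2.2.2⟩
  · intro r hr
    rw [Finset.mem_filter] at hr ⊢
    refine ⟨Finset.mem_univ _, fun h => hr.2.1 ?_, ?_, ?_⟩
    · rw [← h]; simp
    · simpa using hr.2.2.1
    · have := hr.2.2.2; simpa using this
  · intro r _; simp
  · intro r _; simp

lemma goodSet_perm {𝒳 : Type*} {n : ℕ} (phat : 𝒳 → ℝ) (A : Set 𝒳) (α : ℝ)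
    (σ : Equiv.Perm (Fin (n+1))) (i : Fin (n+1)) :
    (fun w : Fin (n+1) → 𝒳 × Fin 2 => fun r => w (σ r)) ⁻¹' goodSet n phat A α i
      = goodSet n phat A α (σ i) := by
  ext w
  simp only [Set.mem_preimage, goodSet, Set.mem_setOf_eq]
  rw [mCnt_perm, nCnt_perm]

section Meas
variable {𝒳 : Type*} [MeasurableSpace 𝒳] {n : ℕ}

lemma scFn_meas (phat : 𝒳 → ℝ) (h : Measurable phat) : Measurable (scFn phat) := by
  unfold scFn confScore
  have h1 : MeasurableSet {e : 𝒳 × Fin 2 | e.2 = 1} :=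
    (measurable_snd (MeasurableSet.singleton (1 : Fin 2)))
  exact Measurable.ite h1 ((measurable_const.sub (h.comp measurable_fst)))
    (h.comp measurable_fst)

lemma mCnt_meas (A : Set 𝒳) (hA : MeasurableSet A) (i : Fin (n+1)) :
    Measurable (mCnt A i : (Fin (n+1) → 𝒳 × Fin 2) → ℕ) := by
  unfold mCnt
  simp only [Finset.card_filter]
  apply Finset.measurable_sum
  intro r _
  by_cases hri : r = i
  · simp [hri]
  · have heq : (fun w : Fin (n+1) → 𝒳 × Fin 2 => if r ≠ i ∧ (w r).1 ∈ A then 1 else 0)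
        = fun w => if (w r).1 ∈ A then 1 else 0 := by
      funext w; simp [hri]
    rw [heq]
    have hset : MeasurableSet {w : Fin (n+1) → 𝒳 × Fin 2 | (w r).1 ∈ A} :=
      (measurable_fst.comp (measurable_pi_apply r)) hA
    exact measurable_const.ite hset measurable_const

lemma nCnt_meas (phat : 𝒳 → ℝ) (hp : Measurable phat) (A : Set 𝒳) (hA : MeasurableSet A)
    (i : Fin (n+1)) :
    Measurable (nCnt phat A i : (Fin (n+1) → 𝒳 × Fin 2) → ℕ) := by
  unfold nCnt
  simp only [Finset.card_filter]
  apply Finset.measurable_sum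
  intro r _
  by_cases hri : r = i
  · simp [hri]
  · have heq : (fun w : Fin (n+1) → 𝒳 × Fin 2 =>
        if r ≠ i ∧ (w r).1 ∈ A ∧ scFn phat (w r) < scFn phat (w i) then 1 else 0)
        = fun w => if (w r).1 ∈ A ∧ scFn phat (w r) < scFn phat (w i) then 1 else 0 := by
      funext w; simp [hri]
    rw [heq]
    have hset1 : MeasurableSet {w : Fin (n+1) → 𝒳 × Fin 2 | (w r).1 ∈ A} :=
      (measurable_fst.comp (measurable_pi_apply r)) hA
    have hset2 : MeasurableSet
        {w : Fin (n+1) → 𝒳 × Fin 2 | scFn phat (w r) < scFn phat (w i)} :=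
      measurableSet_lt ((scFn_meas phat hp).comp (measurable_pi_apply r))
        ((scFn_meas phat hp).comp (measurable_pi_apply i))
    exact measurable_const.ite (hset1.inter hset2) measurable_const

lemma goodSet_meas (phat : 𝒳 → ℝ) (hp : Measurable phat) (A : Set 𝒳) (hA : MeasurableSet A)
    (α : ℝ) (i : Fin (n+1)) : MeasurableSet (goodSet n phat A α i) := by
  have h1 : MeasurableSet {w : Fin (n+1) → 𝒳 × Fin 2 | (w i).1 ∈ A} :=
    (measurable_fst.comp (measurable_pi_apply i)) hA
  have h2 : MeasurableSet
      {w : Fin (n+1) → 𝒳 × Fin 2 | nCnt phat A i w < ⌈((mCnt A i w : ℝ) + 1) * (1 - α)⌉₊} := by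
    have hm : Measurable (fun w : Fin (n+1) → 𝒳 × Fin 2 => (nCnt phat A i w, mCnt A i w)) :=
      (nCnt_meas phat hp A hA i).prodMk (mCnt_meas A hA i)
    have heq : {w : Fin (n+1) → 𝒳 × Fin 2 |
        nCnt phat A i w < ⌈((mCnt A i w : ℝ) + 1) * (1 - α)⌉₊}
        = (fun w : Fin (n+1) → 𝒳 × Fin 2 => (nCnt phat A i w, mCnt A i w)) ⁻¹'
          {p : ℕ × ℕ | p.1 < ⌈((p.2 : ℝ) + 1) * (1 - α)⌉₊} := rfl
    rw [heq]
    exact hm (Set.Countable.measurableSet (Set.to_countable _))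
  exact h1.inter h2

end Meas

lemma pointwise_count {𝒳 : Type*} {n : ℕ} (phat : 𝒳 → ℝ) (A : Set 𝒳) (α : ℝ)
    (hα0 : 0 < α) (hα : α < 1) (w : Fin (n+1) → 𝒳 × Fin 2) :
    (1 - α) * ((Finset.univ.filter fun i : Fin (n+1) => (w i).1 ∈ A).card : ℝ) ≤
    ((Finset.univ.filter fun i : Fin (n+1) => w ∈ goodSet n phat A α i).card : ℝ) := by
  set S := Finset.univ.filter fun i : Fin (n+1) => (w i).1 ∈ A with hS
  set t := fun i : Fin (n+1) => scFn phat (w i) with ht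
  set k := ⌈(S.card : ℝ) * (1 - α)⌉₊ with hk
  have hmem : ∀ i, i ∈ S ↔ (w i).1 ∈ A := by
    intro i; rw [hS, Finset.mem_filter]; simp
  have hm : ∀ i ∈ S, mCnt A i w = S.card - 1 := by
    intro i hi
    have heq : (Finset.univ.filter fun r : Fin (n+1) => r ≠ i ∧ (w r).1 ∈ A) = S.erase i := by
      ext r
      rw [Finset.mem_filter, Finset.mem_erase, hmem]
      simp
    rw [mCnt, heq, Finset.card_erase_of_mem hi]
  have hn : ∀ i, nCnt phat A i w = (S.filter fun r => t r < t i).card := by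
    intro i
    rw [nCnt]
    congr 1
    ext r
    rw [Finset.mem_filter, Finset.mem_filter, hmem]
    constructor
    · rintro ⟨-, h1, h2, h3⟩; exact ⟨h2, h3⟩
    · rintro ⟨h2, h3⟩
      refine ⟨Finset.mem_univ _, ?_, h2, h3⟩
      rintro rfl; exact lt_irrefl _ h3
  have hceil : ∀ i ∈ S, ⌈((mCnt A i w : ℝ) + 1) * (1 - α)⌉₊ = k := by
    intro i hi
    have hpos : 1 ≤ S.card := Finset.card_pos.mpr ⟨i, hi⟩
    rw [hm i hi]
    congr 1
    have hcast : ((S.card - 1 : ℕ) : ℝ) = (S.card : ℝ) - 1 := by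
      rw [Nat.cast_sub hpos]; norm_num
    rw [hcast]; ring_nf
  have hfilter : (Finset.univ.filter fun i : Fin (n+1) => w ∈ goodSet n phat A α i)
      = S.filter fun i => (S.filter fun r => t r < t i).card < k := by
    ext i
    rw [Finset.mem_filter, Finset.mem_filter]
    constructor
    · rintro ⟨-, hiA, hlt⟩
      have hiS : i ∈ S := (hmem i).mpr hiA
      refine ⟨hiS, ?_⟩
      rw [← hn i, ← hceil i hiS]
      exact hlt
    · rintro ⟨hiS, hlt⟩
      refine ⟨Finset.mem_univ _, (hmem i).mp hiS, ?_⟩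
      rw [hceil i hiS, hn i]
      exact hlt
  rw [hfilter]
  have h1 : min k S.card ≤ (S.filter fun i => (S.filter fun r => t r < t i).card < k).card :=
    countLemma S t k
  have h2 : (1 - α) * (S.card : ℝ) ≤ ((min k S.card : ℕ) : ℝ) := by
    rw [Nat.cast_min]
    apply le_min
    · calc (1 - α) * (S.card : ℝ) = (S.card : ℝ) * (1 - α) := by ring
        _ ≤ (k : ℝ) := Nat.le_ceil _
    · nlinarith [Nat.cast_nonneg (α := ℝ) S.card]
  calc (1 - α) * (S.card : ℝ) ≤ ((min k S.card : ℕ) : ℝ) := h2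
    _ ≤ _ := by exact_mod_cast h1

lemma predProb_eq {𝒳 : Type*} (phat : 𝒳 → ℝ) (ℓ : Fin 2) (x : 𝒳) :
    predProb phat ℓ x = 1 - confScore phat x ℓ := by
  unfold predProb confScore
  split_ifs <;> ring

lemma calib_mCnt {Ω 𝒳 : Type*} {n : ℕ} (X : Fin (n+1) → Ω → 𝒳) (Y : Fin (n+1) → Ω → Fin 2)
    (A : Set 𝒳) (ω : Ω) :
    (calibIndices X A ω).card = mCnt A (Fin.last n) (fun i => (X i ω, Y i ω)) := by
  unfold calibIndices mCnt
  refine Finset.card_bij (fun (i : Fin n) _ => i.castSucc) ?_ ?_ ?_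
  · intro i hi
    rw [Finset.mem_filter] at hi ⊢
    exact ⟨Finset.mem_univ _, (Fin.castSucc_lt_last i).ne, hi.2⟩
  · intro a _ b _ h
    exact Fin.castSucc_injective _ h
  · intro r hr
    rw [Finset.mem_filter] at hr
    obtain ⟨-, hne, hArA⟩ := hr
    refine ⟨r.castPred hne, ?_, Fin.castSucc_castPred _ _⟩
    rw [Finset.mem_filter]
    refine ⟨Finset.mem_univ _, ?_⟩
    rw [Fin.castSucc_castPred]
    exact hArA

lemma calib_nCnt {Ω 𝒳 : Type*} {n : ℕ} (X : Fin (n+1) → Ω → 𝒳) (Y : Fin (n+1) → Ω → Fin 2)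
    (phat : 𝒳 → ℝ) (A : Set 𝒳) (ω : Ω) :
    ((calibIndices X A ω).val.map fun i =>
        confScore phat (X i.castSucc ω) (Y i.castSucc ω)).countP
      (fun x => x < confScore phat (X (Fin.last n) ω) (Y (Fin.last n) ω))
      = nCnt phat A (Fin.last n) (fun i => (X i ω, Y i ω)) := by
  rw [Multiset.countP_map]
  have h1 : Multiset.card
      (Multiset.filter (fun i => confScore phat (X i.castSucc ω) (Y i.castSucc ω)
          < confScore phat (X (Fin.last n) ω) (Y (Fin.last n) ω)) (calibIndices X A ω).val)
      = ((calibIndices X A ω).filter (fun i => confScore phat (X i.castSucc ω) (Y i.castSucc ω)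
          < confScore phat (X (Fin.last n) ω) (Y (Fin.last n) ω))).card := by
    rw [Finset.card, Finset.filter_val]
  rw [h1]
  unfold calibIndices nCnt
  rw [Finset.filter_filter]
  refine Finset.card_bij (fun (i : Fin n) _ => i.castSucc) ?_ ?_ ?_
  · intro i hi
    rw [Finset.mem_filter] at hi ⊢
    exact ⟨Finset.mem_univ _, (Fin.castSucc_lt_last i).ne, hi.2.1, hi.2.2⟩
  · intro a _ b _ h
    exact Fin.castSucc_injective _ h
  · intro r hr
    rw [Finset.mem_filter] at hr
    obtain ⟨-, hne, hArA, hlt⟩ := hr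
    refine ⟨r.castPred hne, ?_, Fin.castSucc_castPred _ _⟩
    rw [Finset.mem_filter]
    refine ⟨Finset.mem_univ _, ?_, ?_⟩
    · rw [Fin.castSucc_castPred]; exact hArA
    · rw [Fin.castSucc_castPred]; exact hlt

end LocartAux

/-- **Local (partition-conditional) coverage of Locart**
(Theorem 1 of the paper, quoting Theorem 2 of Cabezas et al. 2024).
Given an exchangeable sequence `(X_i, Y_i)`, `i = 1, …, n+1`, with binary labels, a finite
measurable partition `𝒳 = ⋃_j P j` of the feature space, a fixed measurable classifier
`phat : 𝒳 → [0,1]`, and a miscoverage level `α ∈ (0,1)`, the prediction set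
`C_locart(x) = {ℓ ∈ {0,1} : p̂(ℓ|x) ≥ 1 - q_j}` (for `x ∈ P j`, with `q_j` the locally
calibrated quantile) satisfies, for every `j` with `P(X_{n+1} ∈ P j) > 0`,
`P(Y_{n+1} ∈ C_locart(X_{n+1}) | X_{n+1} ∈ P j) ≥ 1 - α`. -/
theorem locart_local_coverage
    {Ω 𝒳 : Type*} [MeasurableSpace Ω] [MeasurableSpace 𝒳]
    (μ : Measure Ω) [IsProbabilityMeasure μ]
    (n : ℕ) (X : Fin (n + 1) → Ω → 𝒳) (Y : Fin (n + 1) → Ω → Fin 2)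
    (hX : ∀ i, Measurable (X i)) (hY : ∀ i, Measurable (Y i))
    (hexch : Exchangeable μ (fun i ω => (X i ω, Y i ω)))
    (K : ℕ) (P : Fin K → Set 𝒳)
    (hPmeas : ∀ j, MeasurableSet (P j))
    (hPcover : (⋃ j, P j) = Set.univ)
    (hPdisj : Pairwise (Function.onFun Disjoint P))
    (phat : 𝒳 → ℝ) (hphatMeas : Measurable phat)
    (hphat0 : ∀ x, 0 ≤ phat x) (hphat1 : ∀ x, phat x ≤ 1)
    (α : ℝ) (hα : α ∈ Set.Ioo (0 : ℝ) 1)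
    (j : Fin K)
    (hpos : 0 < μ {ω | X (Fin.last n) ω ∈ P j}) :
    μ[|{ω | X (Fin.last n) ω ∈ P j}]
      {ω | ((predProb phat (Y (Fin.last n) ω) (X (Fin.last n) ω) : ℝ) : EReal) ≥
          1 - locartQuantile X Y phat (P j) α ω} ≥
      ENNReal.ofReal (1 - α) := by
  classical
  set A := P j with hA
  set Z : Ω → (Fin (n+1) → 𝒳 × Fin 2) := fun ω i => (X i ω, Y i ω) with hZdef
  have hZ : Measurable Z :=
    measurable_pi_lambda _ fun i => (hX i).prodMk (hY i)
  set ν : Measure (Fin (n+1) → 𝒳 × Fin 2) := Measure.map Z μ with hν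
  have hAm : MeasurableSet A := hPmeas j
  -- reindexing maps
  have hreindex : ∀ σ : Equiv.Perm (Fin (n+1)),
      Measurable (fun w : Fin (n+1) → 𝒳 × Fin 2 => fun r => w (σ r)) :=
    fun σ => measurable_pi_lambda _ fun r => measurable_pi_apply (σ r)
  have hinv : ∀ σ : Equiv.Perm (Fin (n+1)),
      Measure.map (fun w : Fin (n+1) → 𝒳 × Fin 2 => fun r => w (σ r)) ν = ν := by
    intro σ
    rw [hν, Measure.map_map (hreindex σ) hZ]
    exact hexch σ
  have hGm : ∀ i, MeasurableSet (goodSet n phat A α i) :=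
    fun i => goodSet_meas phat hphatMeas A hAm α i
  have hBm : ∀ i : Fin (n+1), MeasurableSet {w : Fin (n+1) → 𝒳 × Fin 2 | (w i).1 ∈ A} :=
    fun i => (measurable_fst.comp (measurable_pi_apply i)) hAm
  -- invariance of the measures of the Good and B sets
  have hGoodconst : ∀ i, ν (goodSet n phat A α i) = ν (goodSet n phat A α (Fin.last n)) := by
    intro i
    set σ := Equiv.swap i (Fin.last n) with hσ
    have h1 : (fun w : Fin (n+1) → 𝒳 × Fin 2 => fun r => w (σ r)) ⁻¹'
        goodSet n phat A α (Fin.last n) = goodSet n phat A α i := by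
      rw [goodSet_perm]
      congr 1
      rw [hσ, Equiv.swap_apply_right]
    calc ν (goodSet n phat A α i)
        = ν ((fun w : Fin (n+1) → 𝒳 × Fin 2 => fun r => w (σ r)) ⁻¹'
            goodSet n phat A α (Fin.last n)) := by rw [h1]
      _ = (Measure.map (fun w : Fin (n+1) → 𝒳 × Fin 2 => fun r => w (σ r)) ν)
            (goodSet n phat A α (Fin.last n)) :=
          (Measure.map_apply (hreindex σ) (hGm _)).symm
      _ = ν (goodSet n phat A α (Fin.last n)) := by rw [hinv σ]
  have hBconst : ∀ i : Fin (n+1), ν {w : Fin (n+1) → 𝒳 × Fin 2 | (w i).1 ∈ A}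
      = ν {w : Fin (n+1) → 𝒳 × Fin 2 | (w (Fin.last n)).1 ∈ A} := by
    intro i
    set σ := Equiv.swap i (Fin.last n) with hσ
    have h1 : (fun w : Fin (n+1) → 𝒳 × Fin 2 => fun r => w (σ r)) ⁻¹'
        {w : Fin (n+1) → 𝒳 × Fin 2 | (w (Fin.last n)).1 ∈ A}
        = {w : Fin (n+1) → 𝒳 × Fin 2 | (w i).1 ∈ A} := by
      ext w
      simp only [Set.mem_preimage, Set.mem_setOf_eq]
      rw [hσ, Equiv.swap_apply_right]
    calc ν {w : Fin (n+1) → 𝒳 × Fin 2 | (w i).1 ∈ A}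
        = ν ((fun w : Fin (n+1) → 𝒳 × Fin 2 => fun r => w (σ r)) ⁻¹'
            {w : Fin (n+1) → 𝒳 × Fin 2 | (w (Fin.last n)).1 ∈ A}) := by rw [h1]
      _ = (Measure.map (fun w : Fin (n+1) → 𝒳 × Fin 2 => fun r => w (σ r)) ν)
            {w : Fin (n+1) → 𝒳 × Fin 2 | (w (Fin.last n)).1 ∈ A} :=
          (Measure.map_apply (hreindex σ) (hBm _)).symm
      _ = _ := by rw [hinv σ]
  -- the lintegral comparison
  have hsum : ENNReal.ofReal (1 - α) *
      ((n+1 : ℕ) * ν {w : Fin (n+1) → 𝒳 × Fin 2 | (w (Fin.last n)).1 ∈ A}) ≤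
      (n+1 : ℕ) * ν (goodSet n phat A α (Fin.last n)) := by
    have hG : ∑ i : Fin (n+1), ν (goodSet n phat A α i)
        = (n+1 : ℕ) * ν (goodSet n phat A α (Fin.last n)) := by
      rw [Finset.sum_congr rfl (fun i _ => hGoodconst i), Finset.sum_const, Finset.card_univ,
        Fintype.card_fin, nsmul_eq_mul]
    have hB : ∑ i : Fin (n+1), ν {w : Fin (n+1) → 𝒳 × Fin 2 | (w i).1 ∈ A}
        = (n+1 : ℕ) * ν {w : Fin (n+1) → 𝒳 × Fin 2 | (w (Fin.last n)).1 ∈ A} := by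
      rw [Finset.sum_congr rfl (fun i _ => hBconst i), Finset.sum_const, Finset.card_univ,
        Fintype.card_fin, nsmul_eq_mul]
    rw [← hG, ← hB]
    -- turn sums of measures into lintegrals of sums of indicators
    have hGint : ∑ i : Fin (n+1), ν (goodSet n phat A α i)
        = ∫⁻ w, ∑ i : Fin (n+1), (goodSet n phat A α i).indicator 1 w ∂ν := by
      rw [lintegral_finset_sum _ (fun i _ => measurable_one.indicator (hGm i))]
      exact (Finset.sum_congr rfl fun i _ => (lintegral_indicator_one (hGm i)).symm)
    have hBint : ∑ i : Fin (n+1), ν {w : Fin (n+1) → 𝒳 × Fin 2 | (w i).1 ∈ A}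
        = ∫⁻ w, ∑ i : Fin (n+1),
            ({w : Fin (n+1) → 𝒳 × Fin 2 | (w i).1 ∈ A}).indicator 1 w ∂ν := by
      rw [lintegral_finset_sum _ (fun i _ => measurable_one.indicator (hBm i))]
      exact (Finset.sum_congr rfl fun i _ => (lintegral_indicator_one (hBm i)).symm)
    rw [hGint, hBint, ← lintegral_const_mul _
      (Finset.measurable_sum _ fun i _ => measurable_one.indicator (hBm i))]
    apply lintegral_mono
    intro w
    simp only []
    beta_reduce
    -- pointwise inequality
    have hGcard : ∑ i : Fin (n+1), (goodSet n phat A α i).indicator 1 w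
        = ((Finset.univ.filter fun i : Fin (n+1) => w ∈ goodSet n phat A α i).card : ℝ≥0∞) := by
      rw [Finset.card_filter]
      push_cast
      apply Finset.sum_congr rfl
      intro i _
      by_cases h : w ∈ goodSet n phat A α i <;> simp [Set.indicator, h]
    have hBcard : ∑ i : Fin (n+1), ({w : Fin (n+1) → 𝒳 × Fin 2 | (w i).1 ∈ A}).indicator 1 w
        = ((Finset.univ.filter fun i : Fin (n+1) => (w i).1 ∈ A).card : ℝ≥0∞) := by
      rw [Finset.card_filter]
      push_cast
      apply Finset.sum_congr rfl
      intro i _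
      by_cases h : (w i).1 ∈ A <;> simp [Set.indicator, h]
    rw [hGcard, hBcard]
    have hpt := pointwise_count phat A α hα.1 hα.2 w
    calc ENNReal.ofReal (1 - α) *
          ((Finset.univ.filter fun i : Fin (n+1) => (w i).1 ∈ A).card : ℝ≥0∞)
        = ENNReal.ofReal ((1 - α) *
            ((Finset.univ.filter fun i : Fin (n+1) => (w i).1 ∈ A).card : ℝ)) := by
          rw [ENNReal.ofReal_mul (by linarith [hα.2] : (0:ℝ) ≤ 1 - α), ENNReal.ofReal_natCast]
      _ ≤ ENNReal.ofReal
            ((Finset.univ.filter fun i : Fin (n+1) => w ∈ goodSet n phat A α i).card : ℝ) :=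
          ENNReal.ofReal_le_ofReal hpt
      _ = _ := ENNReal.ofReal_natCast _
  -- cancel the factor (n+1)
  have hmain : ENNReal.ofReal (1 - α) *
      ν {w : Fin (n+1) → 𝒳 × Fin 2 | (w (Fin.last n)).1 ∈ A} ≤
      ν (goodSet n phat A α (Fin.last n)) := by
    have hne0 : ((n+1 : ℕ) : ℝ≥0∞) ≠ 0 := by positivity
    have hnetop : ((n+1 : ℕ) : ℝ≥0∞) ≠ ⊤ := ENNReal.natCast_ne_top _
    rw [← ENNReal.mul_le_mul_iff_right hne0 hnetop]
    calc ((n+1 : ℕ) : ℝ≥0∞) * (ENNReal.ofReal (1 - α) *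
          ν {w : Fin (n+1) → 𝒳 × Fin 2 | (w (Fin.last n)).1 ∈ A})
        = ENNReal.ofReal (1 - α) *
          (((n+1 : ℕ) : ℝ≥0∞) * ν {w : Fin (n+1) → 𝒳 × Fin 2 | (w (Fin.last n)).1 ∈ A}) := by
          ring
      _ ≤ _ := hsum
  -- identify the events
  set B : Set Ω := {ω | X (Fin.last n) ω ∈ P j} with hBdef
  have hBmeas : MeasurableSet B := (hX (Fin.last n)) hAm
  have hZB : Z ⁻¹' {w : Fin (n+1) → 𝒳 × Fin 2 | (w (Fin.last n)).1 ∈ A} = B := rfl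
  have hZG : Z ⁻¹' (goodSet n phat A α (Fin.last n)) =
      B ∩ {ω | ((predProb phat (Y (Fin.last n) ω) (X (Fin.last n) ω) : ℝ) : EReal) ≥
          1 - locartQuantile X Y phat (P j) α ω} := by
    ext ω
    simp only [Set.mem_preimage, Set.mem_inter_iff, Set.mem_setOf_eq, goodSet, hBdef]
    have hkpos : 1 ≤ ⌈(((calibIndices X A ω).card : ℝ) + 1) * (1 - α)⌉₊ := by
      have h1α : (0:ℝ) < 1 - α := by linarith [hα.2]
      exact Nat.ceil_pos.mpr (by positivity)
    have hiff : (((predProb phat (Y (Fin.last n) ω) (X (Fin.last n) ω) : ℝ) : EReal) ≥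
        1 - locartQuantile X Y phat (P j) α ω) ↔
        nCnt phat A (Fin.last n) (Z ω) <
          ⌈((mCnt A (Fin.last n) (Z ω) : ℝ) + 1) * (1 - α)⌉₊ := by
      rw [predProb_eq, locartQuantile, ereal_event, le_kthSmallestM_iff _ _ hkpos,
        calib_nCnt X Y phat A ω, calib_mCnt X Y A ω]
    constructor
    all_goals intro h
    · exact ⟨h.1, hiff.mpr h.2⟩
    · exact ⟨h.1, hiff.mp h.2⟩
  -- conclude
  have hμG : μ (B ∩ {ω | ((predProb phat (Y (Fin.last n) ω) (X (Fin.last n) ω) : ℝ) : EReal) ≥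
      1 - locartQuantile X Y phat (P j) α ω}) = ν (goodSet n phat A α (Fin.last n)) := by
    rw [hν, Measure.map_apply hZ (hGm _), hZG]
  have hμB : μ B = ν {w : Fin (n+1) → 𝒳 × Fin 2 | (w (Fin.last n)).1 ∈ A} := by
    rw [hν, Measure.map_apply hZ (hBm _), hZB]
  have hfinal : ENNReal.ofReal (1 - α) * μ B ≤
      μ (B ∩ {ω | ((predProb phat (Y (Fin.last n) ω) (X (Fin.last n) ω) : ℝ) : EReal) ≥
        1 - locartQuantile X Y phat (P j) α ω}) := by
    rw [hμB, hμG]; exact hmain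
  rw [ge_iff_le, ProbabilityTheory.cond_apply hBmeas]
  have hμB0 : μ B ≠ 0 := hpos.ne'
  have hμBtop : μ B ≠ ⊤ := measure_ne_top μ B
  calc ENNReal.ofReal (1 - α) = ENNReal.ofReal (1 - α) * ((μ B)⁻¹ * μ B) := by
        rw [ENNReal.inv_mul_cancel hμB0 hμBtop, mul_one]
    _ = (μ B)⁻¹ * (ENNReal.ofReal (1 - α) * μ B) := by ring
    _ ≤ _ := by gcongr
end

section
/- Let r_1, ..., r_{n+1} be exchangeable real-valued random variables and let α ∈ (0,1). Define q̂ to be the ⌈(n+1)(1−α)⌉-th smallest value among r_1, ..., r_n if ⌈(n+1)(1−α)⌉ ≤ n, and q̂ = +∞ otherwise. Then P( r_{n+1} ≤ q̂ ) ≥ 1 − α. -/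
open MeasureTheory ProbabilityTheory
open scoped ENNReal

/-- The `k`-th smallest value (1-indexed, i.e. the `k`-th order statistic) of the values
`r 0, …, r (n-1)`, as an extended real number, with the convention that it equals `+∞`
whenever `k` exceeds `n` (note `k ≥ 1` always holds in applications, so the condition
`k - 1 < n` coincides with `k ≤ n`). -/
noncomputable def kthSmallest {n : ℕ} (r : Fin n → ℝ) (k : ℕ) : EReal :=
  if h : k - 1 < n then ((r (Tuple.sort r ⟨k - 1, h⟩) : ℝ) : EReal) else ⊤

lemma filterLtCard {n k : ℕ} (hk : k ≤ n) :
    (Finset.univ.filter fun m : Fin n => (m : ℕ) < k).card = k := by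
  have : (Finset.univ.filter fun m : Fin n => (m : ℕ) < k)
      = Finset.map (Fin.castLEEmb hk) Finset.univ := by
    ext m
    simp only [Finset.mem_filter, Finset.mem_univ, true_and, Finset.mem_map,
      Fin.castLEEmb]
    constructor
    · intro h; exact ⟨⟨m, h⟩, rfl⟩
    · rintro ⟨a, rfl⟩; exact a.isLt
  rw [this]; simp

lemma le_sorted_of_count_lt {n k : ℕ} (y : Fin n → ℝ) (c : ℝ) (hk : 0 < k)
    (h : k - 1 < n)
    (hcount : (Finset.univ.filter fun i => y i < c).card < k) :
    c ≤ y (Tuple.sort y ⟨k - 1, h⟩) := by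
  by_contra hc
  push_neg at hc
  have hkn : k ≤ n := by omega
  have hsub : (Finset.univ.filter fun m : Fin n => (m : ℕ) < k).image (Tuple.sort y)
      ⊆ Finset.univ.filter fun i => y i < c := by
    intro i hi
    simp only [Finset.mem_image, Finset.mem_filter, Finset.mem_univ, true_and] at hi ⊢
    obtain ⟨m, hm, rfl⟩ := hi
    have hle : m ≤ (⟨k - 1, h⟩ : Fin n) := by
      rw [Fin.le_def]; simpa using by omega
    calc y (Tuple.sort y m) ≤ y (Tuple.sort y ⟨k - 1, h⟩) := Tuple.monotone_sort y hle
      _ < c := hc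
  have hcard := Finset.card_le_card hsub
  rw [Finset.card_image_of_injective _ (Tuple.sort y).injective, filterLtCard hkn] at hcard
  omega

lemma k_le_card_good {n k : ℕ} (hk : k ≤ n) (x : Fin n → ℝ) :
    k ≤ (Finset.univ.filter fun j : Fin n =>
        (Finset.univ.filter fun i => x i < x j).card < k).card := by
  set σ := Tuple.sort x with hσ
  have hsub : (Finset.univ.filter fun m : Fin n => (m : ℕ) < k).image σ
      ⊆ Finset.univ.filter fun j : Fin n =>
        (Finset.univ.filter fun i => x i < x j).card < k := by
    intro j hj
    simp only [Finset.mem_image, Finset.mem_filter, Finset.mem_univ, true_and] at hj ⊢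
    obtain ⟨m, hm, rfl⟩ := hj
    have hinj : (Finset.univ.filter fun i => x i < x (σ m)).card ≤ (Finset.Iio m).card := by
      apply Finset.card_le_card_of_injOn (fun i => σ.symm i)
      · intro i hi
        simp only [Finset.mem_coe, Finset.mem_filter, Finset.mem_univ, true_and] at hi
        simp only [Finset.mem_coe, Finset.mem_Iio]
        have : (x ∘ σ) (σ.symm i) < (x ∘ σ) m := by simpa using hi
        exact (Tuple.monotone_sort x).reflect_lt this
      · intro a _ b _ hab
        exact σ.symm.injective hab
    rw [Fin.card_Iio] at hinj
    omega
  have hcard := Finset.card_le_card hsub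
  rwa [Finset.card_image_of_injective _ σ.injective, filterLtCard hk] at hcard

lemma measurable_count {n : ℕ} (k : ℕ) (j : Fin n) :
    MeasurableSet {x : Fin n → ℝ | (Finset.univ.filter fun i => x i < x j).card < k} := by
  have hm : Measurable fun x : Fin n → ℝ =>
      (Finset.univ.filter fun i => x i < x j).card := by
    simp_rw [Finset.card_filter]
    exact Finset.measurable_sum _ fun i _ =>
      Measurable.ite (measurableSet_lt (measurable_pi_apply i) (measurable_pi_apply j))
        measurable_const measurable_const
  exact hm measurableSet_Iio

/-- **Marginal coverage of split conformal prediction.**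
If `r 1, …, r (n+1)` are exchangeable real random variables, `α ∈ (0,1)`, and `q̂` is the
`⌈(n+1)(1-α)⌉`-th smallest of the first `n` of them (`+∞` if `⌈(n+1)(1-α)⌉ > n`), then
`P(r_{n+1} ≤ q̂) ≥ 1 - α`. -/
theorem split_conformal_marginal_coverage
    {Ω : Type*} [MeasurableSpace Ω] (μ : Measure Ω) [IsProbabilityMeasure μ]
    (n : ℕ) (r : Fin (n + 1) → Ω → ℝ)
    (hmeas : ∀ i, Measurable (r i))
    (hexch : Exchangeable μ r)
    (α : ℝ) (hα : α ∈ Set.Ioo (0 : ℝ) 1) :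
    μ {ω | ((r (Fin.last n) ω : ℝ) : EReal) ≤
        kthSmallest (fun i : Fin n => r i.castSucc ω) ⌈((n : ℝ) + 1) * (1 - α)⌉₊} ≥
      ENNReal.ofReal (1 - α) := by
  obtain ⟨hα0, hα1⟩ := hα
  set k := ⌈((n : ℝ) + 1) * (1 - α)⌉₊ with hkdef
  have hk1 : 1 ≤ k := by
    rw [hkdef]
    exact Nat.one_le_iff_ne_zero.mpr (by
      rw [Ne, Nat.ceil_eq_zero, not_le]
      exact mul_pos (by positivity) (by linarith))
  by_cases h : k - 1 < n
  case neg =>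
    have hset : {ω | ((r (Fin.last n) ω : ℝ) : EReal) ≤
        kthSmallest (fun i : Fin n => r i.castSucc ω) k} = Set.univ := by
      ext ω
      simp [kthSmallest, h]
    rw [hset, measure_univ]
    exact ENNReal.ofReal_le_one.mpr (by linarith)
  case pos =>
  have hkn : k ≤ n := by omega
  set V : Ω → (Fin (n + 1) → ℝ) := fun ω i => r i ω with hVdef
  have hV : Measurable V := measurable_pi_lambda _ hmeas
  set S : Fin (n + 1) → Set (Fin (n + 1) → ℝ) := fun j =>
    {x | (Finset.univ.filter fun i => x i < x j).card < k} with hSdef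
  have hS : ∀ j, MeasurableSet (S j) := fun j => measurable_count k j
  -- all events have equal probability
  have hmeasEq : ∀ j, μ (V ⁻¹' S j) = μ (V ⁻¹' S (Fin.last n)) := by
    intro j
    set τ : Equiv.Perm (Fin (n + 1)) := Equiv.swap j (Fin.last n) with hτdef
    have hmeasPerm : Measurable fun x : Fin (n + 1) → ℝ => x ∘ τ :=
      measurable_pi_lambda _ fun i => measurable_pi_apply _
    have hmap : Measure.map (fun x : Fin (n + 1) → ℝ => x ∘ τ) (Measure.map V μ)
        = Measure.map V μ := by
      rw [Measure.map_map hmeasPerm hV]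
      exact hexch τ
    have hpre : (fun x : Fin (n + 1) → ℝ => x ∘ τ) ⁻¹' S (Fin.last n) = S j := by
      ext x
      simp only [hSdef, Set.mem_preimage, Set.mem_setOf_eq, Function.comp]
      have hτlast : τ (Fin.last n) = j := Equiv.swap_apply_right _ _
      have hcards : (Finset.univ.filter fun i => x (τ i) < x (τ (Fin.last n))).card
          = (Finset.univ.filter fun i => x i < x j).card := by
        apply Finset.card_bij (fun i _ => τ i)
        · intro i hi
          simp only [Finset.mem_filter, Finset.mem_univ, true_and] at hi ⊢
          rwa [hτlast] at hi
        · intro a _ b _ hab; exact τ.injective hab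
        · intro b hb
          simp only [Finset.mem_filter, Finset.mem_univ, true_and] at hb ⊢
          exact ⟨τ.symm b, by simp [hτlast, hb], by simp⟩
      rw [hcards]
    calc μ (V ⁻¹' S j) = Measure.map V μ (S j) := (Measure.map_apply hV (hS j)).symm
      _ = Measure.map V μ ((fun x : Fin (n + 1) → ℝ => x ∘ τ) ⁻¹' S (Fin.last n)) := by
          rw [hpre]
      _ = Measure.map (fun x : Fin (n + 1) → ℝ => x ∘ τ) (Measure.map V μ) (S (Fin.last n)) :=
          (Measure.map_apply hmeasPerm (hS (Fin.last n))).symm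
      _ = Measure.map V μ (S (Fin.last n)) := by rw [hmap]
      _ = μ (V ⁻¹' S (Fin.last n)) := Measure.map_apply hV (hS (Fin.last n))
  -- sum of probabilities is at least k
  have hsum : (k : ℝ≥0∞) ≤ ∑ j : Fin (n + 1), μ (V ⁻¹' S j) := by
    have hle : ∀ ω : Ω, (k : ℝ≥0∞)
        ≤ ∑ j : Fin (n + 1), (V ⁻¹' S j).indicator (fun _ => (1 : ℝ≥0∞)) ω := by
      intro ω
      have hcard := k_le_card_good (Nat.le_succ_of_le hkn) (V ω)
      calc (k : ℝ≥0∞)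
          ≤ ((Finset.univ.filter fun j : Fin (n + 1) =>
              (Finset.univ.filter fun i => V ω i < V ω j).card < k).card : ℝ≥0∞) := by
            exact_mod_cast hcard
        _ = ∑ j : Fin (n + 1), (V ⁻¹' S j).indicator (fun _ => (1 : ℝ≥0∞)) ω := by
            rw [Finset.card_filter]
            push_cast
            apply Finset.sum_congr rfl
            intro j _
            by_cases hj : ω ∈ V ⁻¹' S j
            · rw [Set.indicator_of_mem hj, if_pos (by exact hj)]
            · rw [Set.indicator_of_notMem hj, if_neg (by exact hj)]
    calc (k : ℝ≥0∞) = ∫⁻ _, (k : ℝ≥0∞) ∂μ := by simp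
      _ ≤ ∫⁻ ω, ∑ j : Fin (n + 1), (V ⁻¹' S j).indicator (fun _ => (1 : ℝ≥0∞)) ω ∂μ :=
          lintegral_mono fun ω => hle ω
      _ = ∑ j : Fin (n + 1), ∫⁻ ω, (V ⁻¹' S j).indicator (fun _ => (1 : ℝ≥0∞)) ω ∂μ :=
          lintegral_finset_sum _ fun j _ => measurable_const.indicator (hV (hS j))
      _ = ∑ j : Fin (n + 1), μ (V ⁻¹' S j) := by
          apply Finset.sum_congr rfl
          intro j _
          rw [lintegral_indicator (hV (hS j))]
          simp
  -- probability of the last event is at least 1 - α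
  have hfinal : ENNReal.ofReal (1 - α) ≤ μ (V ⁻¹' S (Fin.last n)) := by
    have hsum' : (k : ℝ≥0∞) ≤ (n + 1 : ℝ≥0∞) * μ (V ⁻¹' S (Fin.last n)) := by
      calc (k : ℝ≥0∞) ≤ ∑ j : Fin (n + 1), μ (V ⁻¹' S j) := hsum
        _ = ∑ _j : Fin (n + 1), μ (V ⁻¹' S (Fin.last n)) := by
            exact Finset.sum_congr rfl fun j _ => hmeasEq j
        _ = (n + 1 : ℝ≥0∞) * μ (V ⁻¹' S (Fin.last n)) := by
            rw [Finset.sum_const, Finset.card_univ, Fintype.card_fin, nsmul_eq_mul]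
            push_cast; ring
    have hreal : ENNReal.ofReal (1 - α) * (n + 1 : ℝ≥0∞) ≤ (k : ℝ≥0∞) := by
      have h1 : ((n : ℝ) + 1) * (1 - α) ≤ (k : ℝ) := Nat.le_ceil _
      have h3 : (n + 1 : ℝ≥0∞) = ENNReal.ofReal ((n : ℝ) + 1) := by
        rw [show ((n : ℝ) + 1) = ((n + 1 : ℕ) : ℝ) by push_cast; ring,
          ENNReal.ofReal_natCast]
        push_cast; ring
      have h2 : ENNReal.ofReal (1 - α) * (n + 1 : ℝ≥0∞)
          = ENNReal.ofReal ((1 - α) * ((n : ℝ) + 1)) := by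
        rw [h3, ← ENNReal.ofReal_mul (by linarith)]
      rw [h2]
      calc ENNReal.ofReal ((1 - α) * ((n : ℝ) + 1)) ≤ ENNReal.ofReal (k : ℝ) :=
            ENNReal.ofReal_le_ofReal (by linarith)
        _ = (k : ℝ≥0∞) := ENNReal.ofReal_natCast k
    have hn0 : (n + 1 : ℝ≥0∞) ≠ 0 := by
      simp
    have hntop : (n + 1 : ℝ≥0∞) ≠ ⊤ := by
      simp [ENNReal.add_ne_top]
    calc ENNReal.ofReal (1 - α) ≤ (k : ℝ≥0∞) / (n + 1 : ℝ≥0∞) :=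
          (ENNReal.le_div_iff_mul_le (Or.inl hn0) (Or.inl hntop)).mpr hreal
      _ ≤ μ (V ⁻¹' S (Fin.last n)) :=
          (ENNReal.div_le_iff_le_mul (Or.inl hn0) (Or.inl hntop)).mpr
            (by rwa [mul_comm] at hsum')
  -- the last event implies coverage
  refine le_trans hfinal (measure_mono ?_)
  intro ω hω
  simp only [Set.mem_preimage, hSdef, Set.mem_setOf_eq] at hω
  simp only [Set.mem_setOf_eq, kthSmallest, dif_pos h]
  rw [EReal.coe_le_coe_iff]
  have hmono : (Finset.univ.filter fun i : Fin n =>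
        r i.castSucc ω < r (Fin.last n) ω).card
      ≤ (Finset.univ.filter fun i : Fin (n + 1) => V ω i < V ω (Fin.last n)).card := by
    apply Finset.card_le_card_of_injOn Fin.castSucc
    · intro i hi
      simp only [Finset.mem_coe, Finset.mem_filter, Finset.mem_univ, true_and] at hi ⊢
      exact hi
    · intro a _ b _ hab
      exact Fin.castSucc_injective n hab
  have hcnt : (Finset.univ.filter fun i : Fin n =>
      (fun i : Fin n => r i.castSucc ω) i < r (Fin.last n) ω).card < k :=
    lt_of_le_of_lt hmono hω
  exact le_sorted_of_count_lt (fun i : Fin n => r i.castSucc ω) (r (Fin.last n) ω) hk1 h hcnt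
end

section
/- Let (X_i, R_i), i = 1, ..., n+1, be an exchangeable sequence of random pairs taking values in 𝒳 × ℝ, with the R_i almost surely pairwise distinct. Let A ⊆ 𝒳 be measurable, and let m ≥ 1 and k ∈ {1, ..., m}. Condition on the event E that X_{n+1} ∈ A and that exactly m of the indices i ∈ {1, ..., n+1} satisfy X_i ∈ A; assume P(E) > 0. Let R_{(k)} denote the k-th smallest value among {R_i : i ∈ {1,...,n+1}, X_i ∈ A}. Then P( R_{n+1} ≤ R_{(k)} | E ) = k/m. -/
open MeasureTheory ProbabilityTheory
open scoped ENNReal Classical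

/-- Key deterministic lemma: membership below the `k`-th order statistic is equivalent
to a counting condition. -/
lemma le_kthSmallestM_iff_s4 (s : Multiset ℝ) (hnd : s.Nodup) (k : ℕ) (hk1 : 1 ≤ k)
    (hkm : k ≤ Multiset.card s) (x : ℝ) (hx : x ∈ s) :
    ((x : EReal) ≤ kthSmallestM s k ↔ Multiset.card (s.filter (· ≤ x)) ≤ k) := by
  set l := s.sort (· ≤ ·) with hl
  have hls : l.SortedLE := by
    rw [List.sortedLE_iff_pairwise, hl]; exact Multiset.pairwise_sort (r := (· ≤ ·)) (s := s)
  have hperm : (l : Multiset ℝ) = s := s.sort_eq _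
  have hlen : l.length = Multiset.card s := s.length_sort _
  have hnd' : l.Nodup := by rw [← Multiset.coe_nodup, hperm]; exact hnd
  have hlt : l.SortedLT := hls.sortedLT_of_nodup hnd'
  have hxl : x ∈ l := by rw [← Multiset.mem_coe, hperm]; exact hx
  obtain ⟨i, hgi⟩ := List.mem_iff_get.mp hxl
  have hdef : k - 1 < Multiset.card s := by omega
  have hkth : kthSmallestM s k = ((l.get ⟨k - 1, hlen ▸ hdef⟩ : ℝ) : EReal) := by
    rw [kthSmallestM, dif_pos hdef]
  have hcount : Multiset.card (s.filter (· ≤ x)) = (i : ℕ) + 1 := by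
    have : s.filter (· ≤ x) = ↑(l.filter (fun a => decide (a ≤ x))) := by
      rw [← hperm, Multiset.filter_coe]
    rw [this, Multiset.coe_card]
    have hsplit : l = l.take ((i : ℕ) + 1) ++ l.drop ((i : ℕ) + 1) := (List.take_append_drop _ _).symm
    have htake : (l.take ((i : ℕ) + 1)).filter (fun a => decide (a ≤ x)) = l.take ((i : ℕ) + 1) := by
      apply List.filter_eq_self.mpr
      intro a ha
      rw [List.mem_take_iff_getElem] at ha
      obtain ⟨j, hj, haj⟩ := ha
      simp only [lt_min_iff] at hj
      have : l.get ⟨j, hj.2⟩ ≤ l.get i :=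
        hls.monotone_get (by simp [Fin.le_def]; omega : (⟨j, hj.2⟩ : Fin l.length) ≤ i)
      simp only [List.get_eq_getElem] at this hgi
      simp [decide_eq_true_eq]
      rw [← haj, ← hgi]; exact this
    have hdrop : (l.drop ((i : ℕ) + 1)).filter (fun a => decide (a ≤ x)) = [] := by
      apply List.filter_eq_nil_iff.mpr
      intro a ha
      rw [List.mem_iff_getElem] at ha
      obtain ⟨j, hj, haj⟩ := ha
      have hjlen : (i : ℕ) + 1 + j < l.length := by
        simp only [List.length_drop] at hj; omega
      have haj' : a = l[(i : ℕ) + 1 + j]'hjlen := by rw [← haj, List.getElem_drop]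
      have : l.get i < l.get ⟨(i : ℕ) + 1 + j, hjlen⟩ :=
        hlt.strictMono_get (by simp [Fin.lt_def]; omega)
      simp only [List.get_eq_getElem] at this hgi
      rw [hgi, ← haj'] at this
      simp [decide_eq_true_eq]
      linarith
    conv_lhs => rw [hsplit]
    rw [List.filter_append, htake, hdrop, List.append_nil, List.length_take]
    have : (i : ℕ) < l.length := i.isLt
    omega
  rw [hkth, hcount, EReal.coe_le_coe_iff, ← hgi]
  constructor
  · intro h
    have := (hlt.strictMono_get.le_iff_le).mp h
    simp [Fin.le_def] at this
    omega
  · intro h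
    apply (hlt.strictMono_get.le_iff_le).mpr
    simp [Fin.le_def]
    omega

/-- Cardinality of a filter is invariant under precomposition with a permutation. -/
lemma card_filter_comp_perm {ι : Type*} [Fintype ι] [DecidableEq ι]
    (σ : Equiv.Perm ι) (p : ι → Prop) :
    (Finset.univ.filter fun i => p (σ i)).card = (Finset.univ.filter p).card := by
  classical
  apply Finset.card_bij (fun i _ => σ i)
  · intro a ha
    simp only [Finset.mem_filter, Finset.mem_univ, true_and] at ha ⊢
    exact ha
  · intro a _ b _ h
    exact σ.injective h
  · intro b hb
    simp only [Finset.mem_filter, Finset.mem_univ, true_and] at hb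
    exact ⟨σ.symm b, by simpa using hb, by simp⟩

/-- Cardinalities of filters agree for pointwise-equivalent predicates,
irrespective of the decidability instances involved. -/
lemma card_filter_congr' {α : Type*} {p q : α → Prop} [DecidablePred p] [DecidablePred q]
    (s : Finset α) (h : ∀ a ∈ s, p a ↔ q a) : (s.filter p).card = (s.filter q).card := by
  rw [Finset.filter_congr h]

/-- On a finset on which `f` is injective, the rank map `j ↦ #{i ∈ T | f i ≤ f j}`
hits every value `r ∈ [1, m]` exactly once. -/
lemma rank_exists_unique {ι : Type*} [DecidableEq ι] (T : Finset ι) (f : ι → ℝ)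
    (hinj : ∀ i ∈ T, ∀ j ∈ T, f i = f j → i = j) (m r : ℕ) (hcard : T.card = m)
    (hr1 : 1 ≤ r) (hrm : r ≤ m) :
    ∃! j, j ∈ T ∧ (T.filter fun i => f i ≤ f j).card = r := by
  classical
  set c : ι → ℕ := fun j => (T.filter fun i => f i ≤ f j).card with hc
  have huniq : ∀ j ∈ T, ∀ j' ∈ T, c j = c j' → j = j' := by
    intro j hj j' hj' hcc
    rcases le_total (f j) (f j') with hle | hle
    · have hsub : T.filter (fun i => f i ≤ f j) ⊆ T.filter (fun i => f i ≤ f j') := by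
        intro i hi
        simp only [Finset.mem_filter] at hi ⊢
        exact ⟨hi.1, hi.2.trans hle⟩
      have heq := Finset.eq_of_subset_of_card_le hsub (le_of_eq hcc.symm)
      have : j' ∈ T.filter (fun i => f i ≤ f j) := by
        rw [heq]; simp [Finset.mem_filter, hj', le_refl]
      simp only [Finset.mem_filter] at this
      exact hinj j hj j' hj' (le_antisymm hle this.2)
    · have hsub : T.filter (fun i => f i ≤ f j') ⊆ T.filter (fun i => f i ≤ f j) := by
        intro i hi
        simp only [Finset.mem_filter] at hi ⊢
        exact ⟨hi.1, hi.2.trans hle⟩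
      have heq := Finset.eq_of_subset_of_card_le hsub (le_of_eq hcc)
      have : j ∈ T.filter (fun i => f i ≤ f j') := by
        rw [heq]; simp [Finset.mem_filter, hj, le_refl]
      simp only [Finset.mem_filter] at this
      exact hinj j hj j' hj' (le_antisymm this.2 hle)
  have hmem_icc : ∀ j ∈ T, c j ∈ Finset.Icc 1 m := by
    intro j hj
    simp only [Finset.mem_Icc]
    constructor
    · have : j ∈ T.filter (fun i => f i ≤ f j) := by simp [Finset.mem_filter, hj]
      exact Finset.card_pos.mpr ⟨j, this⟩
    · rw [← hcard]
      exact Finset.card_le_card (Finset.filter_subset _ _)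
  have himage : T.image c = Finset.Icc 1 m := by
    apply Finset.eq_of_subset_of_card_le
    · intro r hr
      simp only [Finset.mem_image] at hr
      obtain ⟨j, hj, hcj⟩ := hr
      exact hcj ▸ hmem_icc j hj
    · rw [Nat.card_Icc]
      have : (T.image c).card = T.card := Finset.card_image_of_injOn huniq
      omega
  have hr_mem : r ∈ T.image c := by
    rw [himage]; simp [Finset.mem_Icc]; omega
  simp only [Finset.mem_image] at hr_mem
  obtain ⟨j, hj, hcj⟩ := hr_mem
  refine ⟨j, ⟨hj, hcj⟩, ?_⟩
  intro j' ⟨hj', hcj'⟩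
  exact huniq j' hj' j hj (hcj'.trans hcj.symm)

lemma measure_inter_compl_null {Ω : Type*} [MeasurableSpace Ω] (μ : Measure Ω)
    (S N : Set Ω) (hN : μ N = 0) : μ (S ∩ Nᶜ) = μ S := by
  apply le_antisymm (measure_mono Set.inter_subset_left)
  calc μ S ≤ μ ((S ∩ Nᶜ) ∪ N) := measure_mono (by
        intro x hx
        by_cases h : x ∈ N
        · exact Or.inr h
        · exact Or.inl ⟨hx, h⟩)
    _ ≤ μ (S ∩ Nᶜ) + μ N := measure_union_le _ _
    _ = μ (S ∩ Nᶜ) := by rw [hN, add_zero]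

/-- **Conditional rank uniformity within a partition element.**
Let `(X_i, R_i)`, `i = 1, …, n+1`, be exchangeable with the `R_i` almost surely pairwise
distinct, let `A` be measurable, `1 ≤ k ≤ m`. Conditional on the event `E` that
`X_{n+1} ∈ A` and exactly `m` of the indices `i ∈ {1,…,n+1}` satisfy `X_i ∈ A`
(assumed to have positive probability), the probability that `R_{n+1}` does not exceed
the `k`-th smallest value among `{R_i : X_i ∈ A}` is exactly `k / m`. -/
theorem conditional_rank_uniformity
    {Ω 𝒳 : Type*} [MeasurableSpace Ω] [MeasurableSpace 𝒳]
    (μ : Measure Ω) [IsProbabilityMeasure μ]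
    (n : ℕ) (X : Fin (n + 1) → Ω → 𝒳) (R : Fin (n + 1) → Ω → ℝ)
    (hX : ∀ i, Measurable (X i)) (hR : ∀ i, Measurable (R i))
    (hexch : Exchangeable μ (fun i ω => (X i ω, R i ω)))
    (hdistinct : ∀ i j : Fin (n + 1), i ≠ j → μ {ω | R i ω = R j ω} = 0)
    (A : Set 𝒳) (hA : MeasurableSet A)
    (m k : ℕ) (hm : 1 ≤ m) (hk1 : 1 ≤ k) (hkm : k ≤ m)
    (E : Set Ω)
    (hE : E = {ω | X (Fin.last n) ω ∈ A ∧
        (Finset.univ.filter fun i : Fin (n + 1) => X i ω ∈ A).card = m})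
    (hEpos : 0 < μ E) :
    μ[|E]
      {ω | ((R (Fin.last n) ω : ℝ) : EReal) ≤
          kthSmallestM
            ((Finset.univ.filter fun i : Fin (n + 1) => X i ω ∈ A).val.map
              fun i => R i ω) k} =
      ENNReal.ofReal ((k : ℝ) / (m : ℝ)) := by
  classical
  set lst := Fin.last n with hlst
  set T : Set Ω := {ω | ((R lst ω : ℝ) : EReal) ≤
      kthSmallestM
        ((Finset.univ.filter fun i : Fin (n + 1) => X i ω ∈ A).val.map
          fun i => R i ω) k} with hT
  -- the joint random vector
  set Z : Ω → Fin (n + 1) → 𝒳 × ℝ := fun ω i => (X i ω, R i ω) with hZ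
  have hZmeas : Measurable Z :=
    measurable_pi_lambda _ (fun i => (hX i).prodMk (hR i))
  -- transfer lemma from exchangeability
  have key : ∀ (σ : Equiv.Perm (Fin (n + 1))) (B : Set (Fin (n + 1) → 𝒳 × ℝ)),
      MeasurableSet B →
      μ ((fun ω (i : Fin (n + 1)) => Z ω (σ i)) ⁻¹' B) = μ (Z ⁻¹' B) := by
    intro σ B hB
    have h1 : Measurable (fun ω (i : Fin (n + 1)) => Z ω (σ i)) :=
      measurable_pi_lambda _ (fun i => (hX (σ i)).prodMk (hR (σ i)))
    have h2 := hexch σ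
    calc μ ((fun ω (i : Fin (n + 1)) => Z ω (σ i)) ⁻¹' B)
        = Measure.map (fun ω (i : Fin (n + 1)) => Z ω (σ i)) μ B :=
          (Measure.map_apply h1 hB).symm
      _ = Measure.map Z μ B := by
          have : (fun ω (i : Fin (n + 1)) => Z ω (σ i)) =
              (fun ω (i : Fin (n + 1)) => (X (σ i) ω, R (σ i) ω)) := rfl
          rw [this, h2]
      _ = μ (Z ⁻¹' B) := Measure.map_apply hZmeas hB
  -- counting functions on the product space
  set cnt : (Fin (n + 1) → 𝒳 × ℝ) → Fin (n + 1) → ℕ := fun z j =>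
    (Finset.univ.filter fun i => (z i).1 ∈ A ∧ (z i).2 ≤ (z j).2).card with hcnt
  set crd : (Fin (n + 1) → 𝒳 × ℝ) → ℕ := fun z =>
    (Finset.univ.filter fun i => (z i).1 ∈ A).card with hcrd
  set B : Fin (n + 1) → ℕ → Set (Fin (n + 1) → 𝒳 × ℝ) := fun j r =>
    {z | crd z = m ∧ (z j).1 ∈ A ∧ cnt z j = r} with hB
  -- measurability on the product space
  have hmem_meas : ∀ i : Fin (n + 1),
      MeasurableSet {z : Fin (n + 1) → 𝒳 × ℝ | (z i).1 ∈ A} :=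
    fun i => (measurable_fst.comp (measurable_pi_apply i)) hA
  have hle_meas : ∀ i j : Fin (n + 1),
      MeasurableSet {z : Fin (n + 1) → 𝒳 × ℝ | (z i).2 ≤ (z j).2} :=
    fun i j => measurableSet_le (measurable_snd.comp (measurable_pi_apply i))
      (measurable_snd.comp (measurable_pi_apply j))
  have hcrd_meas : Measurable crd := by
    have : crd = fun z => ∑ i : Fin (n + 1), if (z i).1 ∈ A then 1 else 0 := by
      funext z; rw [hcrd]; exact Finset.card_filter _ _
    rw [this]
    exact Finset.measurable_sum _ (fun i _ =>
      Measurable.ite (hmem_meas i) measurable_const measurable_const)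
  have hcnt_meas : ∀ j, Measurable (fun z => cnt z j) := by
    intro j
    have : (fun z => cnt z j) = fun z =>
        ∑ i : Fin (n + 1), if (z i).1 ∈ A ∧ (z i).2 ≤ (z j).2 then 1 else 0 := by
      funext z; rw [hcnt]; exact Finset.card_filter _ _
    rw [this]
    exact Finset.measurable_sum _ (fun i _ =>
      Measurable.ite ((hmem_meas i).inter (hle_meas i j)) measurable_const measurable_const)
  have hBmeas : ∀ j r, MeasurableSet (B j r) := by
    intro j r
    have h1 : MeasurableSet {z : Fin (n + 1) → 𝒳 × ℝ | crd z = m} :=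
      hcrd_meas (measurableSet_singleton m)
    have h2 : MeasurableSet {z : Fin (n + 1) → 𝒳 × ℝ | cnt z j = r} :=
      hcnt_meas j (measurableSet_singleton r)
    exact (h1.inter ((hmem_meas j).inter h2))
  -- the events F j r
  set F : Fin (n + 1) → ℕ → Set Ω := fun j r => Z ⁻¹' (B j r) with hF
  have hFmeas : ∀ j r, MeasurableSet (F j r) := fun j r => hZmeas (hBmeas j r)
  -- step (a): μ (F j r) = μ (F lst r)
  have hcrd_perm : ∀ (ω : Ω) (σ : Equiv.Perm (Fin (n + 1))),
      crd (fun i => Z ω (σ i)) = crd (Z ω) := fun ω σ =>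
    card_filter_comp_perm σ (fun i => (Z ω i).1 ∈ A)
  have hcnt_perm : ∀ (ω : Ω) (σ : Equiv.Perm (Fin (n + 1))) (j : Fin (n + 1)),
      cnt (fun i => Z ω (σ i)) j = cnt (Z ω) (σ j) := by
    intro ω σ j
    simp only [hcnt]
    apply Finset.card_bij (fun i _ => σ i)
    · intro a ha
      simp only [Finset.mem_filter, Finset.mem_univ, true_and] at ha ⊢
      exact ha
    · intro a _ b _ h
      exact σ.injective h
    · intro b hb
      simp only [Finset.mem_filter, Finset.mem_univ, true_and] at hb
      exact ⟨σ.symm b, by simpa using hb, by simp⟩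
  have hswap : ∀ j r, μ (F j r) = μ (F lst r) := by
    intro j r
    have hk := key (Equiv.swap lst j) (B lst r) (hBmeas lst r)
    have hσlst : Equiv.swap lst j lst = j := Equiv.swap_apply_left lst j
    have hset : (fun ω (i : Fin (n + 1)) => Z ω (Equiv.swap lst j i)) ⁻¹' B lst r = F j r := by
      ext ω
      simp only [Set.mem_preimage, hF, hB, Set.mem_setOf_eq]
      rw [hcrd_perm ω (Equiv.swap lst j), hcnt_perm ω (Equiv.swap lst j) lst, hσlst]
    rw [← hset, hk]
  -- the null set of ties
  set N : Set Ω := ⋃ (i : Fin (n + 1)), ⋃ (j : Fin (n + 1)), ⋃ (_ : i ≠ j),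
    {ω | R i ω = R j ω} with hN
  have hNtie : ∀ i j : Fin (n + 1), MeasurableSet {ω | R i ω = R j ω} := by
    intro i j
    have : {ω | R i ω = R j ω} = (fun ω => (R i ω, R j ω)) ⁻¹' {p : ℝ × ℝ | p.1 = p.2} := rfl
    rw [this]
    exact ((hR i).prodMk (hR j)) (measurableSet_eq_fun measurable_fst measurable_snd)
  have hNmeas : MeasurableSet N := by
    apply MeasurableSet.iUnion; intro i
    apply MeasurableSet.iUnion; intro j
    exact MeasurableSet.iUnion (fun _ => hNtie i j)
  have hNnull : μ N = 0 := by
    rw [hN]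
    refine measure_iUnion_null (fun i => measure_iUnion_null (fun j => measure_iUnion_null (fun h => hdistinct i j h)))
  have hNc : ∀ ω, ω ∉ N → ∀ i j : Fin (n + 1), i ≠ j → R i ω ≠ R j ω := by
    intro ω hω i j hij
    intro hcon
    exact hω (Set.mem_iUnion.mpr ⟨i, Set.mem_iUnion.mpr ⟨j, Set.mem_iUnion.mpr ⟨hij, hcon⟩⟩⟩)
  -- event E' with no condition on the last point
  set E' : Set Ω := {ω | crd (Z ω) = m} with hE'
  have hE'meas : MeasurableSet E' := hZmeas (hcrd_meas (measurableSet_singleton m))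
  -- step (b): (n+1) * μ (F lst r) = μ E' for r ∈ [1, m]
  have hb : ∀ r, 1 ≤ r → r ≤ m → ((n + 1 : ℕ) : ℝ≥0∞) * μ (F lst r) = μ E' := by
    intro r hr1 hrm
    -- partition E' ∩ Nᶜ into the F j r ∩ Nᶜ
    have hcover : E' ∩ Nᶜ = ⋃ j ∈ (Finset.univ : Finset (Fin (n + 1))), (F j r ∩ Nᶜ) := by
      ext ω
      simp only [Set.mem_inter_iff, Set.mem_iUnion, Finset.mem_univ, exists_true_left,
        Set.mem_setOf_eq, hE', hF, hB, Set.mem_preimage, exists_prop, true_and]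
      constructor
      · rintro ⟨h1, h2⟩
        obtain ⟨j, ⟨hjT, hjr⟩, -⟩ := rank_exists_unique
          (Finset.univ.filter fun i => (Z ω i).1 ∈ A) (fun i => (Z ω i).2)
          (by
            intro i hi j' hj' hij
            by_contra hne
            exact hNc ω h2 i j' hne hij) m r h1 hr1 hrm
        refine ⟨j, ⟨⟨h1, ?_, ?_⟩, h2⟩⟩
        · simpa using (Finset.mem_filter.mp hjT).2
        · simp only [hcnt]
          rw [← hjr, Finset.filter_filter]
      · rintro ⟨j, ⟨⟨h1, _, _⟩, h2⟩⟩
        exact ⟨h1, h2⟩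
    have hdisj : Set.PairwiseDisjoint
        ((Finset.univ : Finset (Fin (n + 1))) : Set (Fin (n + 1)))
        (fun j => F j r ∩ Nᶜ) := by
      intro j _ j' _ hjj'
      apply Set.disjoint_left.mpr
      rintro ω ⟨hωj, hωN⟩ ⟨hωj', _⟩
      simp only [hF, hB, Set.mem_preimage, Set.mem_setOf_eq] at hωj hωj'
      obtain ⟨h1, hj2, hj3⟩ := hωj
      obtain ⟨_, hj'2, hj'3⟩ := hωj'
      have huniq := rank_exists_unique
        (Finset.univ.filter fun i => (Z ω i).1 ∈ A) (fun i => (Z ω i).2)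
        (by
          intro i hi i' hi' hii'
          by_contra hne
          exact hNc ω hωN i i' hne hii') m r h1 hr1 hrm
      obtain ⟨j₀, _, hj₀⟩ := huniq
      have e1 : j = j₀ := hj₀ j ⟨by simp [Finset.mem_filter, hj2],
        by
          rw [Finset.filter_filter]
          simp only [hcnt] at hj3
          rw [← hj3]⟩
      have e2 : j' = j₀ := hj₀ j' ⟨by simp [Finset.mem_filter, hj'2],
        by
          rw [Finset.filter_filter]
          simp only [hcnt] at hj'3
          rw [← hj'3]⟩
      exact hjj' (e1.trans e2.symm)
    have hsum : μ (E' ∩ Nᶜ) = ∑ j : Fin (n + 1), μ (F j r ∩ Nᶜ) := by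
      rw [hcover]
      exact measure_biUnion_finset hdisj (fun j _ => (hFmeas j r).inter hNmeas.compl)
    rw [measure_inter_compl_null μ E' N hNnull] at hsum
    have hterm : ∀ j, μ (F j r ∩ Nᶜ) = μ (F lst r) := by
      intro j
      rw [measure_inter_compl_null μ _ N hNnull]
      exact hswap j r
    rw [hsum]
    simp only [hterm]
    rw [Finset.sum_const, Finset.card_univ, Fintype.card_fin, nsmul_eq_mul]
  -- consequence: all μ (F lst r), r ∈ [1, m], are equal
  have hceq : ∀ r, 1 ≤ r → r ≤ m → μ (F lst r) = μ (F lst 1) := by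
    intro r hr1 hrm
    have h1 := hb r hr1 hrm
    have h2 := hb 1 le_rfl hm
    have hne : ((n + 1 : ℕ) : ℝ≥0∞) ≠ 0 := Nat.cast_ne_zero.mpr (Nat.succ_ne_zero n)
    have hnetop : ((n + 1 : ℕ) : ℝ≥0∞) ≠ ⊤ := ENNReal.natCast_ne_top _
    exact (ENNReal.mul_right_inj hne hnetop).mp (h1.trans h2.symm)
  set c : ℝ≥0∞ := μ (F lst 1) with hc
  have hcfin : c ≠ ⊤ := measure_ne_top μ _
  -- E is measurable
  have hEmeas : MeasurableSet E := by
    rw [hE]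
    have : {ω | X lst ω ∈ A ∧
        (Finset.univ.filter fun i : Fin (n + 1) => X i ω ∈ A).card = m} =
        Z ⁻¹' {z | (z lst).1 ∈ A ∧ crd z = m} := rfl
    rw [this]
    exact hZmeas ((hmem_meas lst).inter (hcrd_meas (measurableSet_singleton m)))
  -- decomposition of E and E ∩ T via the rank of the last point
  -- key pointwise fact on Nᶜ
  have hpt : ∀ ω, ω ∉ N → crd (Z ω) = m → (Z ω lst).1 ∈ A →
      (ω ∈ T ↔ cnt (Z ω) lst ≤ k) := by
    intro ω hωN h1 h2
    rw [hT]
    simp only [Set.mem_setOf_eq]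
    set s : Multiset ℝ := (Finset.univ.filter fun i : Fin (n + 1) => X i ω ∈ A).val.map
      (fun i => R i ω) with hs
    have hTA : (Finset.univ.filter fun i : Fin (n + 1) => X i ω ∈ A) =
        (Finset.univ.filter fun i => (Z ω i).1 ∈ A) := rfl
    have hsnd : s.Nodup := by
      rw [hs]
      apply Multiset.Nodup.map_on
      · intro i hi j hj hij
        by_contra hne
        exact hNc ω hωN i j hne hij
      · exact (Finset.univ.filter fun i : Fin (n + 1) => X i ω ∈ A).nodup
    have hscard : Multiset.card s = m := by
      rw [hs, Multiset.card_map]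
      exact h1
    have hxmem : R lst ω ∈ s := by
      rw [hs]
      apply Multiset.mem_map.mpr
      refine ⟨lst, ?_, rfl⟩
      rw [← Finset.mem_def]
      simp only [Finset.mem_filter, Finset.mem_univ, true_and]
      exact h2
    have hiff := le_kthSmallestM_iff_s4 s hsnd k hk1 (hscard ▸ hkm) (R lst ω) hxmem
    have hfc : Multiset.card (s.filter (· ≤ R lst ω)) = cnt (Z ω) lst := by
      rw [hs, Multiset.filter_map, Multiset.card_map]
      simp only [hcnt]
      rw [← Finset.filter_val, Finset.filter_filter]
      exact card_filter_congr' _ (fun a _ => Iff.rfl)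
    rw [hfc] at hiff
    exact hiff
  -- cnt lst is between 1 and m on E
  have hcnt_mem : ∀ ω, crd (Z ω) = m → (Z ω lst).1 ∈ A →
      1 ≤ cnt (Z ω) lst ∧ cnt (Z ω) lst ≤ m := by
    intro ω h1 h2
    constructor
    · simp only [hcnt]
      apply Finset.card_pos.mpr
      exact ⟨lst, by simp [Finset.mem_filter, h2]⟩
    · rw [← h1]
      simp only [hcnt, hcrd]
      apply Finset.card_le_card
      intro i hi
      simp only [Finset.mem_filter] at hi ⊢
      exact ⟨hi.1, hi.2.1⟩
  have hEdec : ∀ (K : ℕ), 1 ≤ K → K ≤ m →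
      μ {ω | crd (Z ω) = m ∧ (Z ω lst).1 ∈ A ∧ cnt (Z ω) lst ≤ K} = (K : ℝ≥0∞) * c := by
    intro K hK1 hKm
    have hcover : {ω | crd (Z ω) = m ∧ (Z ω lst).1 ∈ A ∧ cnt (Z ω) lst ≤ K} =
        ⋃ r ∈ Finset.Icc 1 K, F lst r := by
      ext ω
      simp only [Set.mem_setOf_eq, Set.mem_iUnion, Finset.mem_Icc, exists_prop, hF, hB,
        Set.mem_preimage]
      constructor
      · rintro ⟨h1, h2, h3⟩
        exact ⟨cnt (Z ω) lst, ⟨(hcnt_mem ω h1 h2).1, h3⟩, h1, h2, rfl⟩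
      · rintro ⟨r, ⟨hr1, hrK⟩, h1, h2, h3⟩
        exact ⟨h1, h2, h3 ▸ hrK⟩
    have hdisj : (↑(Finset.Icc 1 K) : Set ℕ).PairwiseDisjoint (fun r => F lst r) := by
      intro r _ r' _ hrr'
      apply Set.disjoint_left.mpr
      rintro ω hω hω'
      simp only [hF, hB, Set.mem_preimage, Set.mem_setOf_eq] at hω hω'
      exact hrr' (hω.2.2.symm.trans hω'.2.2)
    rw [hcover, measure_biUnion_finset hdisj (fun r _ => hFmeas lst r)]
    have : ∀ r ∈ Finset.Icc 1 K, μ (F lst r) = c := by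
      intro r hr
      simp only [Finset.mem_Icc] at hr
      exact hceq r hr.1 (hr.2.trans hKm)
    rw [Finset.sum_congr rfl this, Finset.sum_const, Nat.card_Icc]
    simp [nsmul_eq_mul]
  -- μ E = m * c
  have hEc : μ E = (m : ℝ≥0∞) * c := by
    have hEset : E = {ω | crd (Z ω) = m ∧ (Z ω lst).1 ∈ A ∧ cnt (Z ω) lst ≤ m} := by
      ext ω
      rw [hE]
      simp only [Set.mem_setOf_eq]
      constructor
      · rintro ⟨h2, h1⟩
        exact ⟨h1, h2, (hcnt_mem ω h1 h2).2⟩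
      · rintro ⟨h1, h2, _⟩
        exact ⟨h2, h1⟩
    rw [hEset, hEdec m hm le_rfl]
  have hc0 : c ≠ 0 := by
    intro h0
    apply hEpos.ne'
    rw [hEc, h0, mul_zero]
  -- μ (E ∩ T) = k * c
  have hETc : μ (E ∩ T) = (k : ℝ≥0∞) * c := by
    have h1 : (E ∩ T) ∩ Nᶜ =
        {ω | crd (Z ω) = m ∧ (Z ω lst).1 ∈ A ∧ cnt (Z ω) lst ≤ k} ∩ Nᶜ := by
      ext ω
      simp only [Set.mem_inter_iff, Set.mem_setOf_eq, Set.mem_compl_iff]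
      constructor
      · rintro ⟨⟨hωE, hωT⟩, hωN⟩
        rw [hE] at hωE
        obtain ⟨h2, h1⟩ := hωE
        exact ⟨⟨h1, h2, (hpt ω hωN h1 h2).mp hωT⟩, hωN⟩
      · rintro ⟨⟨h1, h2, h3⟩, hωN⟩
        refine ⟨⟨?_, (hpt ω hωN h1 h2).mpr h3⟩, hωN⟩
        rw [hE]
        exact ⟨h2, h1⟩
    calc μ (E ∩ T) = μ ((E ∩ T) ∩ Nᶜ) := (measure_inter_compl_null μ _ N hNnull).symm
      _ = μ ({ω | crd (Z ω) = m ∧ (Z ω lst).1 ∈ A ∧ cnt (Z ω) lst ≤ k} ∩ Nᶜ) := by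
          rw [h1]
      _ = μ {ω | crd (Z ω) = m ∧ (Z ω lst).1 ∈ A ∧ cnt (Z ω) lst ≤ k} :=
          measure_inter_compl_null μ _ N hNnull
      _ = (k : ℝ≥0∞) * c := hEdec k hk1 hkm
  -- final computation
  have hm0 : (m : ℝ≥0∞) ≠ 0 := Nat.cast_ne_zero.mpr (by omega)
  have hmtop : (m : ℝ≥0∞) ≠ ⊤ := ENNReal.natCast_ne_top m
  have hrhs : ENNReal.ofReal ((k : ℝ) / (m : ℝ)) = (k : ℝ≥0∞) / (m : ℝ≥0∞) := by
    rw [ENNReal.ofReal_div_of_pos (by exact_mod_cast Nat.pos_of_ne_zero (by omega))]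
    rw [ENNReal.ofReal_natCast, ENNReal.ofReal_natCast]
  rw [ProbabilityTheory.cond_apply hEmeas μ T, hEc, hETc, hrhs]
  calc ((m : ℝ≥0∞) * c)⁻¹ * ((k : ℝ≥0∞) * c)
      = (m : ℝ≥0∞)⁻¹ * c⁻¹ * ((k : ℝ≥0∞) * c) := by
        rw [ENNReal.mul_inv (Or.inl hm0) (Or.inl hmtop)]
    _ = ((k : ℝ≥0∞) * (m : ℝ≥0∞)⁻¹) * (c⁻¹ * c) := by ring
    _ = (k : ℝ≥0∞) * (m : ℝ≥0∞)⁻¹ := by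
        rw [ENNReal.inv_mul_cancel hc0 hcfin, mul_one]
    _ = (k : ℝ≥0∞) / (m : ℝ≥0∞) := (div_eq_mul_inv _ _).symm
end
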